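/- Let G be a simple graph and x a vertex of G. For any partition N_G(x) = Y ∪ Z into disjoint sets, the Lozin transform L_x(G;Y,Z) satisfies im(L_x(G;Y,Z)) = im(G) + 1, where im denotes the induced matching number. -/

import Mathlib

noncomputable def inducedMatchingNumber {V : Type*} (G : SimpleGraph V) : ℕ :=
  sSup {n : ℕ | ∃ M : G.Subgraph, M.IsMatching ∧
    (∀ ⦃a b : V⦄, a ∈ M.verts → b ∈ M.verts → G.Adj a b → M.Adj a b) ∧
    M.edgeSet.ncard = n}

def lozin {V : Type*} (G : SimpleGraph V) (x : V) (Y Z : Set V) :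
    SimpleGraph ({v : V // v ≠ x} ⊕ Fin 4) :=
  SimpleGraph.fromRel fun p q =>
    match p, q with
    | Sum.inl u, Sum.inl v => G.Adj u.1 v.1
    | Sum.inl u, Sum.inr i => (i = 0 ∧ u.1 ∈ Y) ∨ (i = 3 ∧ u.1 ∈ Z)
    | Sum.inr i, Sum.inr j => (i = 0 ∧ j = 1) ∨ (i = 1 ∧ j = 2) ∨ (i = 2 ∧ j = 3)
    | _, _ => False

open SimpleGraph Sum

namespace LozinAux

variable {V : Type*}

def imSet (G : SimpleGraph V) : Set ℕ :=
  {n : ℕ | ∃ M : G.Subgraph, M.IsMatching ∧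
    (∀ ⦃a b : V⦄, a ∈ M.verts → b ∈ M.verts → G.Adj a b → M.Adj a b) ∧
    M.edgeSet.ncard = n}

lemma im_eq (G : SimpleGraph V) : inducedMatchingNumber G = sSup (imSet G) := rfl

lemma zero_mem_imSet (G : SimpleGraph V) : 0 ∈ imSet G := by
  refine ⟨⊥, ?_, ?_, ?_⟩
  · intro v hv; simp [Subgraph.verts_bot] at hv
  · intro a b ha _ _; simp [Subgraph.verts_bot] at ha
  · simp [Subgraph.edgeSet_bot]

lemma bddAbove_imSet [Finite V] (G : SimpleGraph V) : BddAbove (imSet G) := by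
  refine ⟨(Set.univ : Set (Sym2 V)).ncard, ?_⟩
  rintro n ⟨M, _, _, rfl⟩
  exact Set.ncard_le_ncard (Set.subset_univ _) Set.finite_univ

lemma exists_im [Finite V] (G : SimpleGraph V) :
    ∃ M : G.Subgraph, M.IsMatching ∧
      (∀ ⦃a b : V⦄, a ∈ M.verts → b ∈ M.verts → G.Adj a b → M.Adj a b) ∧
      M.edgeSet.ncard = inducedMatchingNumber G :=
  Nat.sSup_mem ⟨0, zero_mem_imSet G⟩ (bddAbove_imSet G)

lemma le_im [Finite V] {G : SimpleGraph V} {M : G.Subgraph} (h1 : M.IsMatching)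
    (h2 : ∀ ⦃a b : V⦄, a ∈ M.verts → b ∈ M.verts → G.Adj a b → M.Adj a b) :
    M.edgeSet.ncard ≤ inducedMatchingNumber G :=
  le_csSup (bddAbove_imSet G) ⟨M, h1, h2, rfl⟩

variable {G : SimpleGraph V} {x : V} {Y Z : Set V}

lemma lozin_adj_inl_inl {u v : {v : V // v ≠ x}} :
    (lozin G x Y Z).Adj (inl u) (inl v) ↔ G.Adj u.1 v.1 := by
  simp only [lozin, fromRel_adj]
  constructor
  · rintro ⟨-, h | h⟩
    · exact h
    · exact h.symm
  · intro h
    refine ⟨?_, Or.inl h⟩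
    intro hc
    injection hc with h2
    exact G.ne_of_adj h (congrArg Subtype.val h2)

lemma lozin_adj_inl_inr {u : {v : V // v ≠ x}} {i : Fin 4} :
    (lozin G x Y Z).Adj (inl u) (inr i) ↔ (i = 0 ∧ u.1 ∈ Y) ∨ (i = 3 ∧ u.1 ∈ Z) := by
  simp only [lozin, fromRel_adj]
  constructor
  · rintro ⟨-, h | h⟩
    · exact h
    · exact h.elim
  · intro h; exact ⟨by simp, Or.inl h⟩

lemma lozin_adj_inr_inl {u : {v : V // v ≠ x}} {i : Fin 4} :
    (lozin G x Y Z).Adj (inr i) (inl u) ↔ (i = 0 ∧ u.1 ∈ Y) ∨ (i = 3 ∧ u.1 ∈ Z) := by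
  rw [adj_comm]; exact lozin_adj_inl_inr

lemma lozin_adj_inr_inr {i j : Fin 4} :
    (lozin G x Y Z).Adj (inr i) (inr j) ↔
      ((i = 0 ∧ j = 1) ∨ (i = 1 ∧ j = 2) ∨ (i = 2 ∧ j = 3) ∨
       (i = 1 ∧ j = 0) ∨ (i = 2 ∧ j = 1) ∨ (i = 3 ∧ j = 2)) := by
  simp only [lozin, fromRel_adj]
  constructor
  · rintro ⟨-, h | h⟩
    · tauto
    · tauto
  · intro h
    constructor
    · rintro hc; injection hc with h2; subst h2
      rcases h with ⟨rfl, h⟩|⟨rfl,h⟩|⟨rfl,h⟩|⟨rfl,h⟩|⟨rfl,h⟩|⟨rfl,h⟩ <;> exact absurd h (by decide)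
    · tauto


/-- Transfer an induced matching along an injective map, adding one extra edge. -/
lemma transfer {V W : Type*} [Finite W] {G : SimpleGraph V} {H : SimpleGraph W}
    (M : G.Subgraph) (hM : M.IsMatching)
    (f : V → W) (hf : Function.Injective f) (e1 e2 : W)
    (h2 : ∀ u v, M.Adj u v → H.Adj (f u) (f v))
    (h3 : H.Adj e1 e2)
    (h4 : ∀ v ∈ M.verts, f v ≠ e1 ∧ f v ≠ e2)
    (h5 : ∀ u v, u ∈ M.verts → v ∈ M.verts → H.Adj (f u) (f v) → M.Adj u v)
    (h6 : ∀ u ∈ M.verts, ¬ H.Adj (f u) e1 ∧ ¬ H.Adj (f u) e2) :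
    ∃ N : H.Subgraph, N.IsMatching ∧
      (∀ ⦃a b : W⦄, a ∈ N.verts → b ∈ N.verts → H.Adj a b → N.Adj a b) ∧
      N.edgeSet.ncard = M.edgeSet.ncard + 1 := by
  classical
  set N : H.Subgraph :=
    { verts := f '' M.verts ∪ {e1, e2}
      Adj := fun p q => (∃ u v, M.Adj u v ∧ p = f u ∧ q = f v) ∨
        (p = e1 ∧ q = e2) ∨ (p = e2 ∧ q = e1)
      adj_sub := by
        rintro p q (⟨u, v, huv, rfl, rfl⟩ | ⟨rfl, rfl⟩ | ⟨rfl, rfl⟩)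
        exacts [h2 u v huv, h3, h3.symm]
      edge_vert := by
        rintro p q (⟨u, v, huv, rfl, rfl⟩ | ⟨rfl, rfl⟩ | ⟨rfl, rfl⟩)
        · exact Or.inl ⟨u, M.edge_vert huv, rfl⟩
        · exact Or.inr (by simp)
        · exact Or.inr (by simp)
      symm := by
        constructor
        rintro p q (⟨u, v, huv, rfl, rfl⟩ | ⟨rfl, rfl⟩ | ⟨rfl, rfl⟩)
        exacts [Or.inl ⟨v, u, huv.symm, rfl, rfl⟩, Or.inr (Or.inr ⟨rfl, rfl⟩),
          Or.inr (Or.inl ⟨rfl, rfl⟩)] }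
  have hne12 : e1 ≠ e2 := h3.ne
  refine ⟨N, ?_, ?_, ?_⟩
  · -- matching
    rintro p (⟨u, hu, rfl⟩ | hp)
    · obtain ⟨v, hv, hvu⟩ := hM hu
      refine ⟨f v, Or.inl ⟨u, v, hv, rfl, rfl⟩, ?_⟩
      rintro q (⟨u', v', h', hfe, rfl⟩ | ⟨he, rfl⟩ | ⟨he, rfl⟩)
      · obtain rfl := hf hfe
        rw [hvu v' h']
      · exact absurd he (h4 u hu).1
      · exact absurd he (h4 u hu).2
    · rcases hp with rfl | rfl
      · refine ⟨e2, Or.inr (Or.inl ⟨rfl, rfl⟩), ?_⟩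
        rintro q (⟨u', v', h', hfe, hqe⟩ | ⟨he, hqe⟩ | ⟨he, hqe⟩)
        · exact absurd hfe.symm (h4 u' (M.edge_vert h')).1
        · exact hqe
        · exact absurd he hne12
      · refine ⟨e1, Or.inr (Or.inr ⟨rfl, rfl⟩), ?_⟩
        rintro q (⟨u', v', h', hfe, hqe⟩ | ⟨he, hqe⟩ | ⟨he, hqe⟩)
        · exact absurd hfe.symm (h4 u' (M.edge_vert h')).2
        · exact absurd he hne12.symm
        · exact hqe
  · -- induced
    rintro a b (⟨u, hu, rfl⟩ | ha) (⟨v, hv, rfl⟩ | hb) hab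
    · exact Or.inl ⟨u, v, h5 u v hu hv hab, rfl, rfl⟩
    · exfalso
      rcases hb with rfl | rfl
      · exact (h6 u hu).1 hab
      · exact (h6 u hu).2 hab
    · exfalso
      rcases ha with rfl | rfl
      · exact (h6 v hv).1 hab.symm
      · exact (h6 v hv).2 hab.symm
    · rcases ha with rfl | rfl <;> rcases hb with rfl | rfl
      · exact absurd hab (H.loopless.irrefl _)
      · exact Or.inr (Or.inl ⟨rfl, rfl⟩)
      · exact Or.inr (Or.inr ⟨rfl, rfl⟩)
      · exact absurd hab (H.loopless.irrefl _)
  · -- cardinality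
    have hes : N.edgeSet = Sym2.map f '' M.edgeSet ∪ {s(e1, e2)} := by
      ext e
      induction e using Sym2.ind with
      | _ p q =>
        rw [Subgraph.mem_edgeSet]
        constructor
        · rintro (⟨u, v, huv, rfl, rfl⟩ | ⟨rfl, rfl⟩ | ⟨rfl, rfl⟩)
          · exact Or.inl ⟨s(u, v), Subgraph.mem_edgeSet.2 huv, Sym2.map_pair_eq f u v⟩
          · exact Or.inr rfl
          · exact Or.inr (Sym2.eq_swap)
        · rintro (⟨e', he', heq⟩ | he)
          · induction e' using Sym2.ind with
            | _ u v =>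
              rw [Sym2.map_pair_eq] at heq
              rw [Subgraph.mem_edgeSet] at he'
              rcases Sym2.eq_iff.mp heq with ⟨rfl, rfl⟩ | ⟨rfl, rfl⟩
              · exact Or.inl ⟨u, v, he', rfl, rfl⟩
              · exact Or.inl ⟨v, u, he'.symm, rfl, rfl⟩
          · rcases Sym2.eq_iff.mp he with ⟨rfl, rfl⟩ | ⟨rfl, rfl⟩
            · exact Or.inr (Or.inl ⟨rfl, rfl⟩)
            · exact Or.inr (Or.inr ⟨rfl, rfl⟩)
    rw [hes, Set.ncard_union_eq ?_ (Set.toFinite _) (Set.toFinite _),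
      Set.ncard_image_of_injective _ (Sym2.map.injective hf), Set.ncard_singleton]
    rw [Set.disjoint_singleton_right]
    rintro ⟨e', he', heq⟩
    induction e' using Sym2.ind with
    | _ u v =>
      rw [Sym2.map_pair_eq] at heq
      rw [Subgraph.mem_edgeSet] at he'
      rcases Sym2.eq_iff.mp heq with ⟨h1', -⟩ | ⟨-, h2'⟩
      · exact (h4 u (M.edge_vert he')).1 h1'
      · exact (h4 v (M.edge_vert he'.symm)).1 h2'


variable {V : Type*} {G : SimpleGraph V} {x : V} {Y Z : Set V}

open Classical in
noncomputable def fi (x : V) (i : Fin 4) : V → {v : V // v ≠ x} ⊕ Fin 4 :=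
  fun v => if h : v = x then inr i else inl ⟨v, h⟩

lemma fi_apply_x {i : Fin 4} : fi x i x = inr i := dif_pos rfl

lemma fi_apply_ne {i : Fin 4} {v : V} (h : v ≠ x) : fi x i v = inl ⟨v, h⟩ := dif_neg h

lemma fi_inj (x : V) (i : Fin 4) : Function.Injective (fi x i) := by
  intro a b h
  by_cases ha : a = x <;> by_cases hb : b = x
  · rw [ha, hb]
  · rw [ha, fi_apply_x, fi_apply_ne hb] at h; exact absurd h (by simp)
  · rw [hb, fi_apply_x, fi_apply_ne ha] at h; exact absurd h (by simp)
  · rw [fi_apply_ne ha, fi_apply_ne hb] at h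
    injection h with h'
    exact congrArg Subtype.val h'

lemma hYadj (hYZ : Y ∪ Z = G.neighborSet x) : ∀ v ∈ Y, G.Adj x v := by
  intro v hv
  rw [← SimpleGraph.mem_neighborSet, ← hYZ]
  exact Or.inl hv

lemma hZadj (hYZ : Y ∪ Z = G.neighborSet x) : ∀ v ∈ Z, G.Adj x v := by
  intro v hv
  rw [← SimpleGraph.mem_neighborSet, ← hYZ]
  exact Or.inr hv

lemma lozin_ge [Finite V] (hYZ : Y ∪ Z = G.neighborSet x) (hd : Disjoint Y Z) :
    inducedMatchingNumber G + 1 ≤ inducedMatchingNumber (lozin G x Y Z) := by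
  classical
  obtain ⟨M, hM, hI, hcard⟩ := exists_im G
  rw [← hcard]
  by_cases hx : x ∈ M.verts
  · obtain ⟨w, hw, hwu⟩ := hM hx
    have hGxw : G.Adj x w := M.adj_sub hw
    have hwmem : w ∈ M.verts := M.edge_vert hw.symm
    have hwx : w ≠ x := (G.ne_of_adj hGxw).symm
    have hwYZ : w ∈ Y ∪ Z := by rw [hYZ]; exact hGxw
    cases hwYZ with
    | inl hwY =>
      obtain ⟨N, n1, n2, n3⟩ := transfer (H := lozin G x Y Z) M hM (fi x 0) (fi_inj x 0) (inr 2) (inr 3)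
        (by -- h2
          intro u v huv
          by_cases hu : u = x <;> by_cases hv : v = x
          · rw [hu, hv] at huv; exact absurd (M.adj_sub huv) (G.loopless.irrefl _)
          · obtain rfl : v = w := hwu v (hu ▸ huv)
            rw [hu, fi_apply_x, fi_apply_ne hv]
            exact lozin_adj_inr_inl.mpr (Or.inl ⟨rfl, hwY⟩)
          · obtain rfl : u = w := hwu u (hv ▸ huv.symm)
            rw [hv, fi_apply_x, fi_apply_ne hu]
            exact (lozin_adj_inr_inl.mpr (Or.inl ⟨rfl, hwY⟩)).symm
          · rw [fi_apply_ne hu, fi_apply_ne hv]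
            exact lozin_adj_inl_inl.mpr (M.adj_sub huv))
        (lozin_adj_inr_inr.mpr (by tauto)) -- h3
        (by -- h4
          intro v hv
          by_cases hvx : v = x
          · rw [hvx, fi_apply_x]
            exact ⟨fun h => absurd (Sum.inr.inj h) (by decide), fun h => absurd (Sum.inr.inj h) (by decide)⟩
          · rw [fi_apply_ne hvx]; exact ⟨by simp, by simp⟩)
        (by -- h5
          intro u v hu hv hadj
          by_cases hux : u = x <;> by_cases hvx : v = x
          · rw [hux, hvx, fi_apply_x] at hadj
            exact absurd hadj ((lozin G x Y Z).loopless.irrefl _)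
          · rw [hux, fi_apply_x, fi_apply_ne hvx] at hadj
            rw [hux]
            rcases lozin_adj_inr_inl.mp hadj with ⟨-, hvY⟩ | ⟨h03, -⟩
            · exact hI hx hv (hYadj hYZ v hvY)
            · exact absurd h03 (by decide)
          · rw [hvx, fi_apply_x, fi_apply_ne hux] at hadj
            rw [hvx]
            rcases lozin_adj_inl_inr.mp hadj with ⟨-, huY⟩ | ⟨h03, -⟩
            · exact (hI hx hu (hYadj hYZ u huY)).symm
            · exact absurd h03 (by decide)
          · rw [fi_apply_ne hux, fi_apply_ne hvx] at hadj
            exact hI hu hv (lozin_adj_inl_inl.mp hadj))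
        (by -- h6
          intro u hu
          by_cases hux : u = x
          · rw [hux, fi_apply_x]
            constructor <;> · intro h; have := lozin_adj_inr_inr.mp h; revert this; decide
          · rw [fi_apply_ne hux]
            constructor <;> intro h
            · rcases lozin_adj_inl_inr.mp h with ⟨h', -⟩ | ⟨h', -⟩ <;>
                exact absurd h' (by decide)
            · rcases lozin_adj_inl_inr.mp h with ⟨h', -⟩ | ⟨-, huZ⟩
              · exact absurd h' (by decide)
              · have huw : u = w := hwu u (hI hx hu (hZadj hYZ u huZ))
                exact Set.disjoint_left.mp hd hwY (huw ▸ huZ))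
      rw [← n3]
      exact le_im n1 n2
    | inr hwZ =>
      obtain ⟨N, n1, n2, n3⟩ := transfer (H := lozin G x Y Z) M hM (fi x 3) (fi_inj x 3) (inr 0) (inr 1)
        (by -- h2
          intro u v huv
          by_cases hu : u = x <;> by_cases hv : v = x
          · rw [hu, hv] at huv; exact absurd (M.adj_sub huv) (G.loopless.irrefl _)
          · obtain rfl : v = w := hwu v (hu ▸ huv)
            rw [hu, fi_apply_x, fi_apply_ne hv]
            exact lozin_adj_inr_inl.mpr (Or.inr ⟨rfl, hwZ⟩)
          · obtain rfl : u = w := hwu u (hv ▸ huv.symm)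
            rw [hv, fi_apply_x, fi_apply_ne hu]
            exact (lozin_adj_inr_inl.mpr (Or.inr ⟨rfl, hwZ⟩)).symm
          · rw [fi_apply_ne hu, fi_apply_ne hv]
            exact lozin_adj_inl_inl.mpr (M.adj_sub huv))
        (lozin_adj_inr_inr.mpr (by tauto)) -- h3
        (by -- h4
          intro v hv
          by_cases hvx : v = x
          · rw [hvx, fi_apply_x]
            exact ⟨fun h => absurd (Sum.inr.inj h) (by decide), fun h => absurd (Sum.inr.inj h) (by decide)⟩
          · rw [fi_apply_ne hvx]; exact ⟨by simp, by simp⟩)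
        (by -- h5
          intro u v hu hv hadj
          by_cases hux : u = x <;> by_cases hvx : v = x
          · rw [hux, hvx, fi_apply_x] at hadj
            exact absurd hadj ((lozin G x Y Z).loopless.irrefl _)
          · rw [hux, fi_apply_x, fi_apply_ne hvx] at hadj
            rw [hux]
            rcases lozin_adj_inr_inl.mp hadj with ⟨h03, -⟩ | ⟨-, hvZ⟩
            · exact absurd h03 (by decide)
            · exact hI hx hv (hZadj hYZ v hvZ)
          · rw [hvx, fi_apply_x, fi_apply_ne hux] at hadj
            rw [hvx]
            rcases lozin_adj_inl_inr.mp hadj with ⟨h03, -⟩ | ⟨-, huZ⟩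
            · exact absurd h03 (by decide)
            · exact (hI hx hu (hZadj hYZ u huZ)).symm
          · rw [fi_apply_ne hux, fi_apply_ne hvx] at hadj
            exact hI hu hv (lozin_adj_inl_inl.mp hadj))
        (by -- h6
          intro u hu
          by_cases hux : u = x
          · rw [hux, fi_apply_x]
            constructor <;> · intro h; have := lozin_adj_inr_inr.mp h; revert this; decide
          · rw [fi_apply_ne hux]
            constructor <;> intro h
            · rcases lozin_adj_inl_inr.mp h with ⟨-, huY⟩ | ⟨h', -⟩
              · have huw : u = w := hwu u (hI hx hu (hYadj hYZ u huY))
                exact Set.disjoint_left.mp hd (huw ▸ huY) hwZ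
              · exact absurd h' (by decide)
            · rcases lozin_adj_inl_inr.mp h with ⟨h', -⟩ | ⟨h', -⟩ <;>
                exact absurd h' (by decide))
      rw [← n3]
      exact le_im n1 n2
  · obtain ⟨N, n1, n2, n3⟩ := transfer (H := lozin G x Y Z) M hM (fi x 0) (fi_inj x 0) (inr 1) (inr 2)
      (by -- h2
        intro u v huv
        have hu : u ≠ x := fun h => hx (h ▸ M.edge_vert huv)
        have hv : v ≠ x := fun h => hx (h ▸ M.edge_vert huv.symm)
        rw [fi_apply_ne hu, fi_apply_ne hv]
        exact lozin_adj_inl_inl.mpr (M.adj_sub huv))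
      (lozin_adj_inr_inr.mpr (by tauto)) -- h3
      (by -- h4
        intro v hv
        have hvx : v ≠ x := fun h => hx (h ▸ hv)
        rw [fi_apply_ne hvx]; exact ⟨by simp, by simp⟩)
      (by -- h5
        intro u v hu hv hadj
        have hux : u ≠ x := fun h => hx (h ▸ hu)
        have hvx : v ≠ x := fun h => hx (h ▸ hv)
        rw [fi_apply_ne hux, fi_apply_ne hvx] at hadj
        exact hI hu hv (lozin_adj_inl_inl.mp hadj))
      (by -- h6
        intro u hu
        have hux : u ≠ x := fun h => hx (h ▸ hu)
        rw [fi_apply_ne hux]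
        constructor <;> intro h <;>
          rcases lozin_adj_inl_inr.mp h with ⟨h', -⟩ | ⟨h', -⟩ <;>
            exact absurd h' (by decide))
    rw [← n3]
    exact le_im n1 n2


-- ================= upper bound =================

lemma adj_inr1 {p} (h : (lozin G x Y Z).Adj p (inr 1)) : p = inr 0 ∨ p = inr 2 := by
  cases p with
  | inl u =>
    rcases lozin_adj_inl_inr.mp h with ⟨h', -⟩ | ⟨h', -⟩ <;> exact absurd h' (by decide)
  | inr j =>
    rcases lozin_adj_inr_inr.mp h with
      ⟨rfl, h'⟩ | ⟨rfl, h'⟩ | ⟨rfl, h'⟩ | ⟨rfl, h'⟩ | ⟨rfl, h'⟩ | ⟨rfl, h'⟩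
    · exact Or.inl rfl
    · exact absurd h' (by decide)
    · exact absurd h' (by decide)
    · exact absurd h' (by decide)
    · exact Or.inr rfl
    · exact absurd h' (by decide)

lemma adj_inr2 {p} (h : (lozin G x Y Z).Adj p (inr 2)) : p = inr 1 ∨ p = inr 3 := by
  cases p with
  | inl u =>
    rcases lozin_adj_inl_inr.mp h with ⟨h', -⟩ | ⟨h', -⟩ <;> exact absurd h' (by decide)
  | inr j =>
    rcases lozin_adj_inr_inr.mp h with
      ⟨rfl, h'⟩ | ⟨rfl, h'⟩ | ⟨rfl, h'⟩ | ⟨rfl, h'⟩ | ⟨rfl, h'⟩ | ⟨rfl, h'⟩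
    · exact absurd h' (by decide)
    · exact Or.inl rfl
    · exact absurd h' (by decide)
    · exact absurd h' (by decide)
    · exact absurd h' (by decide)
    · exact Or.inr rfl

lemma adj_inr0 {p} (h : (lozin G x Y Z).Adj p (inr 0)) :
    (∃ u, p = inl u ∧ u.1 ∈ Y) ∨ p = inr 1 := by
  cases p with
  | inl u =>
    rcases lozin_adj_inl_inr.mp h with ⟨-, hY⟩ | ⟨h', -⟩
    · exact Or.inl ⟨u, rfl, hY⟩
    · exact absurd h' (by decide)
  | inr j =>
    rcases lozin_adj_inr_inr.mp h with
      ⟨rfl, h'⟩ | ⟨rfl, h'⟩ | ⟨rfl, h'⟩ | ⟨rfl, h'⟩ | ⟨rfl, h'⟩ | ⟨rfl, h'⟩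
    · exact absurd h' (by decide)
    · exact absurd h' (by decide)
    · exact absurd h' (by decide)
    · exact Or.inr rfl
    · exact absurd h' (by decide)
    · exact absurd h' (by decide)

lemma adj_inr3 {p} (h : (lozin G x Y Z).Adj p (inr 3)) :
    (∃ u, p = inl u ∧ u.1 ∈ Z) ∨ p = inr 2 := by
  cases p with
  | inl u =>
    rcases lozin_adj_inl_inr.mp h with ⟨h', -⟩ | ⟨-, hZ⟩
    · exact absurd h' (by decide)
    · exact Or.inl ⟨u, rfl, hZ⟩
  | inr j =>
    rcases lozin_adj_inr_inr.mp h with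
      ⟨rfl, h'⟩ | ⟨rfl, h'⟩ | ⟨rfl, h'⟩ | ⟨rfl, h'⟩ | ⟨rfl, h'⟩ | ⟨rfl, h'⟩
    · exact absurd h' (by decide)
    · exact absurd h' (by decide)
    · exact Or.inr rfl
    · exact absurd h' (by decide)
    · exact absurd h' (by decide)
    · exact absurd h' (by decide)

variable {M' : (lozin G x Y Z).Subgraph}

lemma no_e12 (hM' : M'.IsMatching)
    (hI' : ∀ ⦃a b⦄, a ∈ M'.verts → b ∈ M'.verts → (lozin G x Y Z).Adj a b → M'.Adj a b)
    (h : inr 0 ∈ M'.verts ∨ inr 3 ∈ M'.verts) : ¬ M'.Adj (inr 1) (inr 2) := by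
  intro h12
  cases h with
  | inl h0 =>
    have h1 : (inr 1 : {v : V // v ≠ x} ⊕ Fin 4) ∈ M'.verts := M'.edge_vert h12
    have hadj : (lozin G x Y Z).Adj (inr 0) (inr 1) := lozin_adj_inr_inr.mpr (by tauto)
    have hM01 := hI' h0 h1 hadj
    obtain ⟨p, -, hpu⟩ := hM' h1
    have e1 := hpu _ hM01.symm
    have e2 := hpu _ h12
    rw [← e2] at e1
    exact absurd (Sum.inr.inj e1) (by decide)
  | inr h3 =>
    have h2 : (inr 2 : {v : V // v ≠ x} ⊕ Fin 4) ∈ M'.verts := M'.edge_vert h12.symm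
    have hadj : (lozin G x Y Z).Adj (inr 2) (inr 3) := lozin_adj_inr_inr.mpr (by tauto)
    have hM23 := hI' h2 h3 hadj
    obtain ⟨p, -, hpu⟩ := hM' h2
    have e1 := hpu _ hM23
    have e2 := hpu _ h12.symm
    rw [← e2] at e1
    exact absurd (Sum.inr.inj e1) (by decide)

/-- The restriction of a subgraph of the Lozin transform to the old vertices. -/
def NA (M' : (lozin G x Y Z).Subgraph) : G.Subgraph where
  verts := {v | ∃ (h : v ≠ x) (u : {a : V // a ≠ x}), M'.Adj (inl ⟨v, h⟩) (inl u)}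
  Adj := fun a b => ∃ (ha : a ≠ x) (hb : b ≠ x), M'.Adj (inl ⟨a, ha⟩) (inl ⟨b, hb⟩)
  adj_sub := by
    rintro a b ⟨ha, hb, h⟩
    exact lozin_adj_inl_inl.mp (M'.adj_sub h)
  edge_vert := by
    rintro a b ⟨ha, hb, h⟩
    exact ⟨ha, ⟨b, hb⟩, h⟩
  symm := by
    constructor
    rintro a b ⟨ha, hb, h⟩
    exact ⟨hb, ha, h.symm⟩

lemma NA_matching (hM' : M'.IsMatching) : (NA M').IsMatching := by
  rintro v ⟨hvx, u, hadj⟩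
  refine ⟨u.1, ⟨hvx, u.2, hadj⟩, ?_⟩
  rintro b ⟨hvx', hb, h⟩
  obtain ⟨p, -, hpu⟩ := hM' (M'.edge_vert hadj)
  have h1 : inl u = p := hpu _ hadj
  have h2 : inl (⟨b, hb⟩ : {a : V // a ≠ x}) = p := hpu _ h
  rw [← h1] at h2
  injection h2 with h3
  exact (congrArg Subtype.val h3)

lemma NA_induced
    (hI' : ∀ ⦃a b⦄, a ∈ M'.verts → b ∈ M'.verts → (lozin G x Y Z).Adj a b → M'.Adj a b) :
    ∀ ⦃a b : V⦄, a ∈ (NA M').verts → b ∈ (NA M').verts → G.Adj a b → (NA M').Adj a b := by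
  rintro a b ⟨hax, u', ha⟩ ⟨hbx, v', hb⟩ hab
  exact ⟨hax, hbx, hI' (M'.edge_vert ha) (M'.edge_vert hb) (lozin_adj_inl_inl.mpr hab)⟩

lemma NA_card :
    Sym2.map (fi x 0) '' (NA M').edgeSet = {e ∈ M'.edgeSet | ∀ p ∈ e, ∃ u, p = inl u} := by
  ext e
  constructor
  · rintro ⟨e', he', rfl⟩
    induction e' using Sym2.ind with
    | _ a b =>
      obtain ⟨ha, hb, h⟩ := Subgraph.mem_edgeSet.mp he'
      rw [Sym2.map_pair_eq, fi_apply_ne ha, fi_apply_ne hb]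
      refine ⟨Subgraph.mem_edgeSet.mpr h, ?_⟩
      intro p hp
      rcases Sym2.mem_iff.mp hp with rfl | rfl
      · exact ⟨_, rfl⟩
      · exact ⟨_, rfl⟩
  · rintro ⟨he, hL⟩
    induction e using Sym2.ind with
    | _ p q =>
      obtain ⟨u, rfl⟩ := hL p (Sym2.mem_mk_left p q)
      obtain ⟨v, rfl⟩ := hL _ (Sym2.mem_mk_right _ _)
      have he' : M'.Adj (inl u) (inl v) := Subgraph.mem_edgeSet.mp he
      refine ⟨s(u.1, v.1), Subgraph.mem_edgeSet.mpr ⟨u.2, v.2, he'⟩, ?_⟩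
      rw [Sym2.map_pair_eq, fi_apply_ne u.2, fi_apply_ne v.2]

lemma lozin_le [Finite V] (hYZ : Y ∪ Z = G.neighborSet x) (hd : Disjoint Y Z) :
    inducedMatchingNumber (lozin G x Y Z) ≤ inducedMatchingNumber G + 1 := by
  classical
  obtain ⟨M', hM', hI', hcard⟩ := exists_im (lozin G x Y Z)
  rw [← hcard]
  set A := {e ∈ M'.edgeSet | ∀ p ∈ e, ∃ u, p = inl u} with hA
  set B := {e ∈ M'.edgeSet | ¬ ∀ p ∈ e, ∃ u, p = inl u} with hB
  have hU : M'.edgeSet = A ∪ B := by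
    ext e
    constructor
    · intro he
      by_cases h : ∀ p ∈ e, ∃ u, p = inl u
      · exact Or.inl ⟨he, h⟩
      · exact Or.inr ⟨he, h⟩
    · rintro (⟨he, -⟩ | ⟨he, -⟩) <;> exact he
  have hdisj : Disjoint A B := by
    rw [Set.disjoint_left]
    rintro e ⟨-, h⟩ ⟨-, h'⟩
    exact h' h
  have hsplit : M'.edgeSet.ncard = A.ncard + B.ncard := by
    rw [hU]
    exact Set.ncard_union_eq hdisj (Set.toFinite _) (Set.toFinite _)
  have hAcard : A.ncard = (NA M').edgeSet.ncard := by
    rw [hA, ← NA_card, Set.ncard_image_of_injective _ (Sym2.map.injective (fi_inj x 0))]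
  have hBmem : ∀ e ∈ B, ∃ (i : Fin 4) (p : {v : V // v ≠ x} ⊕ Fin 4),
      e = s(inr i, p) ∧ M'.Adj (inr i) p := by
    intro e heB
    rw [hB] at heB
    obtain ⟨he, hne⟩ := heB
    push_neg at hne
    obtain ⟨q, hq, hnl⟩ := hne
    cases q with
    | inl u => exact absurd rfl (hnl u)
    | inr i =>
      obtain ⟨p, rfl⟩ := Sym2.mem_iff_exists.mp hq
      exact ⟨i, p, rfl, Subgraph.mem_edgeSet.mp he⟩
  by_cases h0 : (inr 0 : {v : V // v ≠ x} ⊕ Fin 4) ∈ M'.verts <;>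
    by_cases h3 : (inr 3 : {v : V // v ≠ x} ⊕ Fin 4) ∈ M'.verts
  · -- both matched
    obtain ⟨p0, hp0, hu0⟩ := hM' h0
    obtain ⟨p3, hp3, hu3⟩ := hM' h3
    have hBsub : B ⊆ {s(inr 0, p0), s(inr 3, p3)} := by
      intro e heB
      obtain ⟨i, p, rfl, hadj⟩ := hBmem e heB
      have hL := M'.adj_sub hadj
      fin_cases i
      · exact Or.inl (by rw [hu0 p hadj]; try rfl)
      · rcases adj_inr1 hL.symm with rfl | rfl
        · have h' := hu0 _ hadj.symm
          exact Or.inl (by rw [← h']; exact Sym2.eq_swap)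
        · exact absurd hadj (no_e12 hM' hI' (Or.inl h0))
      · rcases adj_inr2 hL.symm with rfl | rfl
        · exact absurd hadj.symm (no_e12 hM' hI' (Or.inl h0))
        · have h' := hu3 _ hadj.symm
          exact Or.inr (by rw [← h']; exact Sym2.eq_swap)
      · exact Or.inr (by rw [hu3 p hadj]; rfl)
    have hB2 : B.ncard ≤ 2 := by
      refine le_trans (Set.ncard_le_ncard hBsub (Set.toFinite _)) ?_
      refine le_trans (Set.ncard_insert_le _ _) ?_
      rw [Set.ncard_singleton]
    have hu : ∃ u : {a : V // a ≠ x},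
        (M'.Adj (inl u) (inr 0) ∧ u.1 ∈ Y) ∨ (M'.Adj (inl u) (inr 3) ∧ u.1 ∈ Z) := by
      rcases adj_inr0 (M'.adj_sub hp0).symm with ⟨u, rfl, huY⟩ | rfl
      · exact ⟨u, Or.inl ⟨hp0.symm, huY⟩⟩
      · rcases adj_inr3 (M'.adj_sub hp3).symm with ⟨u, rfl, huZ⟩ | rfl
        · exact ⟨u, Or.inr ⟨hp3.symm, huZ⟩⟩
        · exfalso
          have h1 : (inr 1 : {v : V // v ≠ x} ⊕ Fin 4) ∈ M'.verts := M'.edge_vert hp0.symm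
          have h2 : (inr 2 : {v : V // v ≠ x} ⊕ Fin 4) ∈ M'.verts := M'.edge_vert hp3.symm
          exact no_e12 hM' hI' (Or.inl h0)
            (hI' h1 h2 (lozin_adj_inr_inr.mpr (by tauto)))
    obtain ⟨u, hu⟩ := hu
    have humem : inl u ∈ M'.verts := by
      rcases hu with ⟨h, -⟩ | ⟨h, -⟩ <;> exact M'.edge_vert h
    have hupart : ∀ q, M'.Adj (inl u) q → q = inr 0 ∨ q = inr 3 := by
      obtain ⟨pu, -, huu⟩ := hM' humem
      intro q hq
      rcases hu with ⟨h, -⟩ | ⟨h, -⟩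
      · exact Or.inl (by rw [huu q hq, ← huu _ h])
      · exact Or.inr (by rw [huu q hq, ← huu _ h])
    have hGxu : G.Adj x u.1 := by
      rcases hu with ⟨-, hY⟩ | ⟨-, hZ⟩
      exacts [hYadj hYZ _ hY, hZadj hYZ _ hZ]
    have hunotNA : u.1 ∉ (NA M').verts := by
      rintro ⟨h, u', hadj⟩
      have heq : (⟨u.1, h⟩ : {a : V // a ≠ x}) = u := Subtype.ext rfl
      rw [heq] at hadj
      rcases hupart _ hadj with h' | h' <;> exact absurd h' (by simp)
    have hxnotNA : x ∉ (NA M').verts := by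
      rintro ⟨h, -⟩
      exact h rfl
    have hkey : ∀ v ∈ (NA M').verts, ¬ G.Adj v x ∧ ¬ G.Adj v u.1 := by
      rintro v ⟨hvx, u', hadj⟩
      have hvmem : inl (⟨v, hvx⟩ : {a : V // a ≠ x}) ∈ M'.verts := M'.edge_vert hadj
      obtain ⟨pv, -, hvu⟩ := hM' hvmem
      constructor
      · intro hvGx
        have hvYZ : v ∈ Y ∪ Z := by
          rw [hYZ]
          exact hvGx.symm
        rcases hvYZ with hY | hZ
        · have hLa : (lozin G x Y Z).Adj (inl ⟨v, hvx⟩) (inr 0) :=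
            lozin_adj_inl_inr.mpr (Or.inl ⟨rfl, hY⟩)
          have h1 := hvu _ (hI' hvmem h0 hLa)
          rw [← hvu _ hadj] at h1
          exact absurd h1 (by simp)
        · have hLa : (lozin G x Y Z).Adj (inl ⟨v, hvx⟩) (inr 3) :=
            lozin_adj_inl_inr.mpr (Or.inr ⟨rfl, hZ⟩)
          have h1 := hvu _ (hI' hvmem h3 hLa)
          rw [← hvu _ hadj] at h1
          exact absurd h1 (by simp)
      · intro hvGu
        have hLa : (lozin G x Y Z).Adj (inl ⟨v, hvx⟩) (inl u) := lozin_adj_inl_inl.mpr hvGu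
        have := hI' hvmem humem hLa
        rcases hupart _ this.symm with h' | h' <;> exact absurd h' (by simp)
    obtain ⟨N, n1, n2, n3⟩ := transfer (H := G) (NA M') (NA_matching hM') id
      Function.injective_id x u.1
      (fun a b h => (NA M').adj_sub h)
      hGxu
      (by
        intro v hv
        exact ⟨fun h => hxnotNA (h ▸ hv), fun h => hunotNA (h ▸ hv)⟩)
      (fun a b ha hb hab => NA_induced hI' ha hb hab)
      (fun v hv => hkey v hv)
    have hle : (NA M').edgeSet.ncard + 1 ≤ inducedMatchingNumber G := n3 ▸ le_im n1 n2
    omega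
  · -- inr 0 matched, inr 3 not
    obtain ⟨p0, hp0, hu0⟩ := hM' h0
    have hBsub : B ⊆ {s(inr 0, p0)} := by
      intro e heB
      obtain ⟨i, p, rfl, hadj⟩ := hBmem e heB
      have hL := M'.adj_sub hadj
      fin_cases i
      · rw [Set.mem_singleton_iff, hu0 p hadj]; try rfl
      · rcases adj_inr1 hL.symm with rfl | rfl
        · have h' := hu0 _ hadj.symm
          rw [Set.mem_singleton_iff, ← h']
          exact Sym2.eq_swap
        · exact absurd hadj (no_e12 hM' hI' (Or.inl h0))
      · rcases adj_inr2 hL.symm with rfl | rfl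
        · exact absurd hadj.symm (no_e12 hM' hI' (Or.inl h0))
        · exact absurd (M'.edge_vert hadj.symm) h3
      · exact absurd (M'.edge_vert hadj) h3
    have hB1 : B.ncard ≤ 1 := by
      refine le_trans (Set.ncard_le_ncard hBsub (Set.toFinite _)) ?_
      rw [Set.ncard_singleton]
    have hle := le_im (NA_matching hM') (NA_induced hI')
    omega
  · -- inr 3 matched, inr 0 not
    obtain ⟨p3, hp3, hu3⟩ := hM' h3
    have hBsub : B ⊆ {s(inr 3, p3)} := by
      intro e heB
      obtain ⟨i, p, rfl, hadj⟩ := hBmem e heB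
      have hL := M'.adj_sub hadj
      fin_cases i
      · exact absurd (M'.edge_vert hadj) h0
      · rcases adj_inr1 hL.symm with rfl | rfl
        · exact absurd (M'.edge_vert hadj.symm) h0
        · exact absurd hadj (no_e12 hM' hI' (Or.inr h3))
      · rcases adj_inr2 hL.symm with rfl | rfl
        · exact absurd hadj.symm (no_e12 hM' hI' (Or.inr h3))
        · have h' := hu3 _ hadj.symm
          rw [Set.mem_singleton_iff, ← h']
          exact Sym2.eq_swap
      · rw [Set.mem_singleton_iff, hu3 p hadj]; try rfl
    have hB1 : B.ncard ≤ 1 := by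
      refine le_trans (Set.ncard_le_ncard hBsub (Set.toFinite _)) ?_
      rw [Set.ncard_singleton]
    have hle := le_im (NA_matching hM') (NA_induced hI')
    omega
  · -- neither matched
    have hBsub : B ⊆ {s(inr 1, inr 2)} := by
      intro e heB
      obtain ⟨i, p, rfl, hadj⟩ := hBmem e heB
      have hL := M'.adj_sub hadj
      fin_cases i
      · exact absurd (M'.edge_vert hadj) h0
      · rcases adj_inr1 hL.symm with rfl | rfl
        · exact absurd (M'.edge_vert hadj.symm) h0
        · rfl
      · rcases adj_inr2 hL.symm with rfl | rfl
        · rw [Set.mem_singleton_iff]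
          exact Sym2.eq_swap
        · exact absurd (M'.edge_vert hadj.symm) h3
      · exact absurd (M'.edge_vert hadj) h3
    have hB1 : B.ncard ≤ 1 := by
      refine le_trans (Set.ncard_le_ncard hBsub (Set.toFinite _)) ?_
      rw [Set.ncard_singleton]
    have hle := le_im (NA_matching hM') (NA_induced hI')
    omega

end LozinAux

theorem stmt_7 {V : Type*} [Fintype V] (G : SimpleGraph V) (x : V) (Y Z : Set V)
    (hYZ : Y ∪ Z = G.neighborSet x) (hd : Disjoint Y Z) :
    inducedMatchingNumber (lozin G x Y Z) = inducedMatchingNumber G + 1 := by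
  have h1 := LozinAux.lozin_ge hYZ hd
  have h2 := LozinAux.lozin_le hYZ hd
  omega
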